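/- On a pseudo-Riemannian manifold (M,g) with Levi-Civita connection ∇ and curvature convention ∇_α∇_β ω_μ − ∇_β∇_α ω_μ = R_{αβμ}{}^ν ω_ν, for any vector field x the second Lie derivative of the metric satisfies L_x L_x g_{αβ} = L_{∇_x x} g_{αβ} − 2 R_{αγβμ} x^γ x^μ + 2 (∇_α x_μ)(∇_β x^μ). -/
import Mathlib


/-- Lemma B.3 (Mars 2005), metric case, pointwise jet version: for a vector field x,
L_x L_x g_{αβ} = L_{∇_x x} g_{αβ} − 2 R_{αγβμ} x^γ x^μ + 2 (∇_α x_μ)(∇_β x^μ), with the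
curvature convention ∇_α∇_β ω_μ − ∇_β∇_α ω_μ = R_{αβμ}{}^ν ω_ν (so for vectors
∇_a∇_b x^c − ∇_b∇_a x^c = −R_{abμ}{}^c x^μ), Riemann antisymmetries and pair symmetry.
Here Dx a b = ∇_a x^b, DDx a b c = ∇_a∇_b x^c, Riem a b c d = R_{abc}{}^d, and the metric
is parallel so Lie derivatives along vector fields are expressed via ∇. -/
theorem stmt_19
    (ι : Type*) [Fintype ι]
    (g : ι → ι → ℝ) (gsymm : ∀ a b, g a b = g b a)
    (x : ι → ℝ) (Dx : ι → ι → ℝ) (DDx : ι → ι → ι → ℝ)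
    (Riem : ι → ι → ι → ι → ℝ)
    (hComm : ∀ a b c, DDx a b c - DDx b a c = -(∑ μ, Riem a b μ c * x μ))
    (hanti1 : ∀ a b c d, Riem a b c d = -Riem b a c d)
    (hanti2 : ∀ a b c d, (∑ ν, Riem a b c ν * g ν d) = -(∑ ν, Riem a b d ν * g ν c))
    (hpair : ∀ a b c d, (∑ ν, Riem a b c ν * g ν d) = (∑ ν, Riem c d a ν * g ν b)) :
    let Xl : ι → ι → ℝ := fun α β => ∑ μ, g β μ * Dx α μ        -- ∇_α x_β
    let Lxg : ι → ι → ℝ := fun α β => Xl α β + Xl β α           -- (L_x g)_{αβ}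
    let LLxg : ι → ι → ℝ := fun α β =>                          -- (L_x L_x g)_{αβ}
      (∑ μ, x μ * ((∑ ν, g β ν * DDx μ α ν) + (∑ ν, g α ν * DDx μ β ν)))
        + (∑ μ, Lxg μ β * Dx α μ) + (∑ μ, Lxg α μ * Dx β μ)
    let Da : ι → ι → ℝ := fun α c =>                            -- ∇_α (∇_x x)^c
      ∑ μ, (Dx α μ * Dx μ c + x μ * DDx α μ c)
    let Lag : ι → ι → ℝ := fun α β =>                           -- (L_{∇_x x} g)_{αβ}
      (∑ c, g β c * Da α c) + (∑ c, g α c * Da β c)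
    let Rlow : ι → ι → ι → ι → ℝ := fun a b c d =>              -- R_{abcd}
      ∑ ν, Riem a b c ν * g ν d
    ∀ α β, LLxg α β
      = Lag α β - 2 * (∑ γ, ∑ μ, Rlow α γ β μ * x γ * x μ)
        + 2 * (∑ μ, Xl α μ * Dx β μ) := by
  intro Xl Lxg LLxg Da Lag Rlow α β
  classical
  -- derived symmetry: R_{abcd} = R_{badc}
  have h1 : ∀ a b c d : ι, (∑ ν, Riem a b c ν * g ν d) = ∑ ν, Riem b a d ν * g ν c := by
    intro a b c d
    have e1 : (∑ ν, Riem a b c ν * g ν d) = -(∑ ν, Riem b a c ν * g ν d) := by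
      rw [← Finset.sum_neg_distrib]
      exact Finset.sum_congr rfl fun ν _ => by rw [hanti1 a b c ν]; ring
    rw [e1, hanti2 b a c d]; ring
  -- commutation of second covariant derivatives
  have hDD : ∀ a b c : ι, DDx a b c = DDx b a c - ∑ ρ, Riem a b ρ c * x ρ := by
    intro a b c; have := hComm a b c; linarith
  -- curvature term 1
  have hK1 : (∑ μ, x μ * ∑ ν, g β ν * ∑ ρ, Riem μ α ρ ν * x ρ)
      = ∑ γ, ∑ μ, Rlow α γ β μ * x γ * x μ := by
    calc (∑ μ, x μ * ∑ ν, g β ν * ∑ ρ, Riem μ α ρ ν * x ρ)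
        = ∑ μ, ∑ ν, ∑ ρ, x μ * (g β ν * (Riem μ α ρ ν * x ρ)) := by
          simp only [Finset.mul_sum]
      _ = ∑ μ, ∑ ρ, ∑ ν, x μ * (g β ν * (Riem μ α ρ ν * x ρ)) := by
          exact Finset.sum_congr rfl fun μ _ => Finset.sum_comm
      _ = ∑ μ, ∑ ρ, (∑ ν, Riem μ α ρ ν * g ν β) * x μ * x ρ := by
          refine Finset.sum_congr rfl fun μ _ => Finset.sum_congr rfl fun ρ _ => ?_
          rw [Finset.sum_mul, Finset.sum_mul]
          exact Finset.sum_congr rfl fun ν _ => by rw [gsymm β ν]; ring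
      _ = ∑ μ, ∑ ρ, Rlow α μ β ρ * x μ * x ρ := by
          refine Finset.sum_congr rfl fun μ _ => Finset.sum_congr rfl fun ρ _ => ?_
          rw [h1 μ α ρ β]
  -- curvature term 2
  have hK2 : (∑ μ, x μ * ∑ ν, g α ν * ∑ ρ, Riem μ β ρ ν * x ρ)
      = ∑ γ, ∑ μ, Rlow α γ β μ * x γ * x μ := by
    calc (∑ μ, x μ * ∑ ν, g α ν * ∑ ρ, Riem μ β ρ ν * x ρ)
        = ∑ μ, ∑ ν, ∑ ρ, x μ * (g α ν * (Riem μ β ρ ν * x ρ)) := by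
          simp only [Finset.mul_sum]
      _ = ∑ μ, ∑ ρ, ∑ ν, x μ * (g α ν * (Riem μ β ρ ν * x ρ)) := by
          exact Finset.sum_congr rfl fun μ _ => Finset.sum_comm
      _ = ∑ μ, ∑ ρ, (∑ ν, Riem μ β ρ ν * g ν α) * x μ * x ρ := by
          refine Finset.sum_congr rfl fun μ _ => Finset.sum_congr rfl fun ρ _ => ?_
          rw [Finset.sum_mul, Finset.sum_mul]
          exact Finset.sum_congr rfl fun ν _ => by rw [gsymm α ν]; ring
      _ = ∑ μ, ∑ ρ, Rlow α ρ β μ * x ρ * x μ := by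
          refine Finset.sum_congr rfl fun μ _ => Finset.sum_congr rfl fun ρ _ => ?_
          rw [hpair μ β ρ α, h1 ρ α μ β]; ring
      _ = ∑ ρ, ∑ μ, Rlow α ρ β μ * x ρ * x μ := Finset.sum_comm
  -- split the second-derivative block using hDD
  have hT1 : (∑ μ, x μ * ((∑ ν, g β ν * DDx μ α ν) + (∑ ν, g α ν * DDx μ β ν)))
      = (∑ μ, x μ * ((∑ ν, g β ν * DDx α μ ν) + (∑ ν, g α ν * DDx β μ ν)))
        - (∑ μ, x μ * ∑ ν, g β ν * ∑ ρ, Riem μ α ρ ν * x ρ)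
        - (∑ μ, x μ * ∑ ν, g α ν * ∑ ρ, Riem μ β ρ ν * x ρ) := by
    rw [← Finset.sum_sub_distrib, ← Finset.sum_sub_distrib]
    refine Finset.sum_congr rfl fun μ _ => ?_
    have e1 : (∑ ν, g β ν * DDx μ α ν)
        = (∑ ν, g β ν * DDx α μ ν) - ∑ ν, g β ν * ∑ ρ, Riem μ α ρ ν * x ρ := by
      rw [← Finset.sum_sub_distrib]
      exact Finset.sum_congr rfl fun ν _ => by rw [hDD μ α ν]; ring
    have e2 : (∑ ν, g α ν * DDx μ β ν)
        = (∑ ν, g α ν * DDx β μ ν) - ∑ ν, g α ν * ∑ ρ, Riem μ β ρ ν * x ρ := by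
      rw [← Finset.sum_sub_distrib]
      exact Finset.sum_congr rfl fun ν _ => by rw [hDD μ β ν]; ring
    rw [e1, e2]; ring
  -- reorder the commuted second-derivative block to match Lag's DDx part
  have hA : (∑ μ, x μ * ((∑ ν, g β ν * DDx α μ ν) + (∑ ν, g α ν * DDx β μ ν)))
      = (∑ c, g β c * ∑ μ, x μ * DDx α μ c) + (∑ c, g α c * ∑ μ, x μ * DDx β μ c) := by
    have r1 : (∑ c, g β c * ∑ μ, x μ * DDx α μ c)
        = ∑ μ, ∑ c, g β c * (x μ * DDx α μ c) := by
      simp only [Finset.mul_sum]; exact Finset.sum_comm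
    have r2 : (∑ c, g α c * ∑ μ, x μ * DDx β μ c)
        = ∑ μ, ∑ c, g α c * (x μ * DDx β μ c) := by
      simp only [Finset.mul_sum]; exact Finset.sum_comm
    rw [r1, r2, ← Finset.sum_add_distrib]
    refine Finset.sum_congr rfl fun μ _ => ?_
    rw [mul_add, Finset.mul_sum, Finset.mul_sum]
    congr 1
    · exact Finset.sum_congr rfl fun ν _ => by ring
    · exact Finset.sum_congr rfl fun ν _ => by ring
  -- split Lag into its Dx·Dx part and its x·DDx part
  have hLag : Lag α β
      = ((∑ c, g β c * ∑ μ, Dx α μ * Dx μ c) + (∑ c, g α c * ∑ μ, Dx β μ * Dx μ c))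
        + ((∑ c, g β c * ∑ μ, x μ * DDx α μ c) + (∑ c, g α c * ∑ μ, x μ * DDx β μ c)) := by
    show (∑ c, g β c * Da α c) + (∑ c, g α c * Da β c) = _
    have e : ∀ γ δ : ι, (∑ c, g δ c * Da γ c)
        = (∑ c, g δ c * ∑ μ, Dx γ μ * Dx μ c) + (∑ c, g δ c * ∑ μ, x μ * DDx γ μ c) := by
      intro γ δ
      rw [← Finset.sum_add_distrib]
      refine Finset.sum_congr rfl fun c _ => ?_
      show g δ c * ∑ μ, (Dx γ μ * Dx μ c + x μ * DDx γ μ c) = _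
      rw [Finset.sum_add_distrib]; ring
    rw [e α β, e β α]; ring
  -- the first-derivative blocks
  have hS : (∑ μ, ∑ ν, g μ ν * Dx β ν * Dx α μ) = ∑ μ, ∑ ν, g μ ν * Dx α ν * Dx β μ := by
    rw [Finset.sum_comm]
    refine Finset.sum_congr rfl fun μ _ => Finset.sum_congr rfl fun ν _ => ?_
    rw [gsymm ν μ]; ring
  have hBC : (∑ μ, Lxg μ β * Dx α μ) + (∑ μ, Lxg α μ * Dx β μ)
      = ((∑ c, g β c * ∑ μ, Dx α μ * Dx μ c) + (∑ c, g α c * ∑ μ, Dx β μ * Dx μ c))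
        + 2 * (∑ μ, Xl α μ * Dx β μ) := by
    have eB : (∑ μ, Lxg μ β * Dx α μ)
        = (∑ μ, ∑ ν, g β ν * Dx μ ν * Dx α μ) + (∑ μ, ∑ ν, g μ ν * Dx β ν * Dx α μ) := by
      rw [← Finset.sum_add_distrib]
      refine Finset.sum_congr rfl fun μ _ => ?_
      show ((∑ ν, g β ν * Dx μ ν) + (∑ ν, g μ ν * Dx β ν)) * Dx α μ = _
      rw [add_mul, Finset.sum_mul, Finset.sum_mul]
    have eC : (∑ μ, Lxg α μ * Dx β μ)
        = (∑ μ, ∑ ν, g μ ν * Dx α ν * Dx β μ) + (∑ μ, ∑ ν, g α ν * Dx μ ν * Dx β μ) := by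
      rw [← Finset.sum_add_distrib]
      refine Finset.sum_congr rfl fun μ _ => ?_
      show ((∑ ν, g μ ν * Dx α ν) + (∑ ν, g α ν * Dx μ ν)) * Dx β μ = _
      rw [add_mul, Finset.sum_mul, Finset.sum_mul]
    have e1 : (∑ c, g β c * ∑ μ, Dx α μ * Dx μ c) = ∑ μ, ∑ ν, g β ν * Dx μ ν * Dx α μ := by
      simp only [Finset.mul_sum]
      rw [Finset.sum_comm]
      exact Finset.sum_congr rfl fun μ _ => Finset.sum_congr rfl fun ν _ => by ring
    have e2 : (∑ c, g α c * ∑ μ, Dx β μ * Dx μ c) = ∑ μ, ∑ ν, g α ν * Dx μ ν * Dx β μ := by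
      simp only [Finset.mul_sum]
      rw [Finset.sum_comm]
      exact Finset.sum_congr rfl fun μ _ => Finset.sum_congr rfl fun ν _ => by ring
    have e3 : (∑ μ, Xl α μ * Dx β μ) = ∑ μ, ∑ ν, g μ ν * Dx α ν * Dx β μ := by
      refine Finset.sum_congr rfl fun μ _ => ?_
      show (∑ ν, g μ ν * Dx α ν) * Dx β μ = _
      rw [Finset.sum_mul]
    rw [eB, eC, e1, e2, e3, hS]; ring
  -- assemble
  show (∑ μ, x μ * ((∑ ν, g β ν * DDx μ α ν) + (∑ ν, g α ν * DDx μ β ν)))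
      + (∑ μ, Lxg μ β * Dx α μ) + (∑ μ, Lxg α μ * Dx β μ)
    = Lag α β - 2 * (∑ γ, ∑ μ, Rlow α γ β μ * x γ * x μ) + 2 * (∑ μ, Xl α μ * Dx β μ)
  rw [hT1, hK1, hK2, hA, hLag]
  linarith [hBC]
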